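/- The function f(z,w) = z³/w + w³/z, defined on Γ ∖ {0} where Γ = {|z| = |w|} ⊂ ℂ², extends continuously (indeed differentiably, by setting f(0,0)=0) to all of Γ, and f is a CR function on the regular part of Γ, i.e., f is annihilated by the tangential Cauchy–Riemann operator on Γ ∖ {0}. -/

import Mathlib

open Complex

/-- The cone `Γ = {|z| = |w|} ⊂ ℂ²`. -/
def GammaCone : Set (ℂ × ℂ) := {p | ‖p.1‖ = ‖p.2‖}

/-- The function `z³/w + w³/z` on `Γ ∖ {0}`, extended by `0` at the origin. -/
noncomputable def fCR : ℂ × ℂ → ℂ :=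
  fun p => if p = 0 then 0 else p.1 ^ 3 / p.2 + p.2 ^ 3 / p.1

lemma gamma_ne_zero {p : ℂ × ℂ} (hp : p ∈ GammaCone) (h : p ≠ 0) :
    p.1 ≠ 0 ∧ p.2 ≠ 0 := by
  have hp' : ‖p.1‖ = ‖p.2‖ := hp
  constructor
  · intro h1
    apply h
    have : ‖p.2‖ = 0 := by rw [← hp', h1]; simp
    have h2 : p.2 = 0 := by simpa using this
    exact Prod.ext h1 h2
  · intro h2
    apply h
    have : ‖p.1‖ = 0 := by rw [hp', h2]; simp
    have h1 : p.1 = 0 := by simpa using this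
    exact Prod.ext h1 h2

lemma fCR_bound : ∀ p ∈ GammaCone, ‖fCR p‖ ≤ 2 * ‖p.1‖ ^ 2 := by
  intro p hp
  by_cases h : p = 0
  · simp [fCR, h]
  · obtain ⟨h1, h2⟩ := gamma_ne_zero hp h
    have hn : ‖p.1‖ = ‖p.2‖ := hp
    have h1' : ‖p.1‖ ≠ 0 := by simpa using h1
    simp only [fCR, if_neg h]
    calc ‖p.1 ^ 3 / p.2 + p.2 ^ 3 / p.1‖ ≤ ‖p.1 ^ 3 / p.2‖ + ‖p.2 ^ 3 / p.1‖ :=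
          norm_add_le _ _
      _ = ‖p.1‖ ^ 3 / ‖p.2‖ + ‖p.2‖ ^ 3 / ‖p.1‖ := by
          simp [norm_div, norm_pow]
      _ = 2 * ‖p.1‖ ^ 2 := by
          rw [← hn, pow_succ, mul_div_assoc, div_self h1', mul_one]
          ring

theorem fCR_continuous_and_CR :
    ContinuousOn fCR GammaCone ∧
    (∀ p ∈ GammaCone, ‖fCR p‖ ≤ 2 * ‖p.1‖ ^ 2) ∧
    (∀ θ : ℝ, DifferentiableOn ℂ (fun z : ℂ => fCR (z, Complex.exp (θ * I) * z))
      {z : ℂ | z ≠ 0}) := by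
  refine ⟨?_, fCR_bound, ?_⟩
  · intro p hp
    by_cases h : p = 0
    · subst h
      have hz : fCR 0 = 0 := by simp [fCR]
      rw [ContinuousWithinAt, hz]
      have hg : Filter.Tendsto (fun q : ℂ × ℂ => 2 * ‖q.1‖ ^ 2)
          (nhdsWithin 0 GammaCone) (nhds 0) := by
        have hc : Continuous (fun q : ℂ × ℂ => 2 * ‖q.1‖ ^ 2) := by continuity
        have := hc.tendsto 0
        simp only [Prod.fst_zero, norm_zero] at this
        simpa using this.mono_left nhdsWithin_le_nhds
      refine squeeze_zero_norm' ?_ hg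
      exact Filter.eventually_inf_principal.2 (Filter.Eventually.of_forall fCR_bound)
    · obtain ⟨h1, h2⟩ := gamma_ne_zero hp h
      apply ContinuousAt.continuousWithinAt
      have hev : fCR =ᶠ[nhds p] fun q => q.1 ^ 3 / q.2 + q.2 ^ 3 / q.1 := by
        filter_upwards [isOpen_ne.mem_nhds h] with q hq
        simp [fCR, if_neg hq]
      apply ContinuousAt.congr ?_ hev.symm
      exact (((continuous_fst.pow 3).continuousAt.div continuous_snd.continuousAt h2).add
        ((continuous_snd.pow 3).continuousAt.div continuous_fst.continuousAt h1))
  · intro θ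
    set e := Complex.exp (θ * I) with he
    have hene : e ≠ 0 := Complex.exp_ne_zero _
    have heq : ∀ z ∈ {z : ℂ | z ≠ 0},
        fCR (z, e * z) = z ^ 3 / (e * z) + (e * z) ^ 3 / z := by
      intro z hz
      have hne : (z, e * z) ≠ (0 : ℂ × ℂ) := by
        intro h; exact hz (congrArg Prod.fst h)
      simp only [fCR]
      rw [if_neg hne]
    apply DifferentiableOn.congr ?_ heq
    apply DifferentiableOn.add
    · exact (differentiableOn_pow 3).div
        ((differentiableOn_const e).mul differentiableOn_id)
        (fun z hz => mul_ne_zero hene hz)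
    · exact (((differentiableOn_const e).mul differentiableOn_id).pow 3).div
        differentiableOn_id (fun z hz => hz)
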